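/- Let λ₁ ≥ … ≥ λ_p ≥ 0, and let b ∈ ℝ^p be a nonnegative vector with b_j > b_l for some indices j, l ∈ {1,…,p}. For 0 < ε ≤ (b_j − b_l)/2, define b_ε ∈ ℝ^p by (b_ε)_l = b_l + ε, (b_ε)_j = b_j − ε, and (b_ε)_i = b_i for i ∉ {j, l}. Then J_λ(b_ε) ≤ J_λ(b). -/
import Mathlib


/-- The nonincreasing rearrangement of the absolute values of the coordinates of `b`. -/
noncomputable def sortedAbs {p : ℕ} (b : Fin p → ℝ) : Fin p → ℝ :=
  fun i => |b (Tuple.sort (fun j => |b j|) (Fin.rev i))|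

/-- The sorted ℓ₁ norm `J_λ(b) = Σ_i λ_i |b|_{(i)}`. -/
noncomputable def Jlam {p : ℕ} (lam b : Fin p → ℝ) : ℝ :=
  ∑ i, lam i * sortedAbs b i

/-- The permutation underlying `sortedAbs`. -/
noncomputable def sortPerm {p : ℕ} (b : Fin p → ℝ) : Equiv.Perm (Fin p) :=
  (Fin.revPerm).trans (Tuple.sort (fun j => |b j|))

lemma sortedAbs_eq {p : ℕ} (b : Fin p → ℝ) (i : Fin p) :
    sortedAbs b i = |b (sortPerm b i)| := rfl

lemma sortedAbs_antitone {p : ℕ} (b : Fin p → ℝ) : Antitone (sortedAbs b) := by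
  intro i k hik
  have hmono := Tuple.monotone_sort (fun j => |b j|)
  have : Fin.rev k ≤ Fin.rev i := Fin.rev_le_rev.mpr hik
  simpa [sortedAbs] using hmono this

lemma monovary_lam_sortedAbs {p : ℕ} (lam b : Fin p → ℝ)
    (hlam_anti : ∀ i j : Fin p, i ≤ j → lam j ≤ lam i) :
    Monovary lam (sortedAbs b) := by
  intro i k hik
  rcases le_total i k with h | h
  · exact absurd (sortedAbs_antitone b h) (not_le.mpr hik)
  · exact hlam_anti k i h

/-- For any permutation σ, `∑ λᵢ b(σ i) ≤ J_λ(b)` when `b` is nonnegative. -/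
lemma sum_perm_le_Jlam {p : ℕ} (lam : Fin p → ℝ)
    (hlam_anti : ∀ i j : Fin p, i ≤ j → lam j ≤ lam i)
    (b : Fin p → ℝ) (hb : ∀ i, 0 ≤ b i) (σ : Equiv.Perm (Fin p)) :
    ∑ i, lam i * b (σ i) ≤ Jlam lam b := by
  have hmv := monovary_lam_sortedAbs lam b hlam_anti
  have key := hmv.sum_mul_comp_perm_le_sum_mul (σ := σ.trans (sortPerm b).symm)
  have heq : ∀ i, sortedAbs b ((σ.trans (sortPerm b).symm) i) = b (σ i) := by
    intro i
    rw [sortedAbs_eq]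
    simp [abs_of_nonneg (hb _)]
  calc ∑ i, lam i * b (σ i)
      = ∑ i, lam i * sortedAbs b ((σ.trans (sortPerm b).symm) i) := by
        simp_rw [heq]
    _ ≤ ∑ i, lam i * sortedAbs b i := key
    _ = Jlam lam b := rfl

/-- Transferring mass `ε` from a larger coordinate `b_j` to a smaller coordinate `b_l`
of a nonnegative vector does not increase the sorted ℓ₁ norm. -/
theorem Jlam_transfer {p : ℕ} (lam : Fin p → ℝ)
    (hlam_anti : ∀ i j : Fin p, i ≤ j → lam j ≤ lam i)
    (hlam_nonneg : ∀ i, 0 ≤ lam i)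
    (b : Fin p → ℝ) (hb : ∀ i, 0 ≤ b i)
    (j l : Fin p) (hjl : b l < b j)
    (ε : ℝ) (hε : 0 < ε) (hε' : ε ≤ (b j - b l) / 2) :
    Jlam lam (fun i => if i = l then b l + ε else if i = j then b j - ε else b i)
      ≤ Jlam lam b := by
  set c : Fin p → ℝ := fun i => if i = l then b l + ε else if i = j then b j - ε else b i
    with hc
  have hjl' : j ≠ l := by rintro rfl; exact lt_irrefl _ hjl
  have hεlt : ε < b j - b l := by linarith
  have hcnn : ∀ i, 0 ≤ c i := by
    intro i
    simp only [hc]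
    split_ifs with h1 h2
    · linarith [hb l]
    · linarith [hb l]
    · exact hb i
  -- J(c) = ∑ λᵢ c(σ i) for σ = sortPerm c
  set σ := sortPerm c with hσ
  have hJc : Jlam lam c = ∑ i, lam i * c (σ i) := by
    unfold Jlam
    refine Finset.sum_congr rfl fun i _ => ?_
    rw [sortedAbs_eq, abs_of_nonneg (hcnn _)]
  set i₀ := σ.symm l with hi₀
  set i₁ := σ.symm j with hi₁
  have hσi₀ : σ i₀ = l := σ.apply_symm_apply l
  have hσi₁ : σ i₁ = j := σ.apply_symm_apply j
  have hi01 : i₀ ≠ i₁ := by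
    intro h; apply hjl'; rw [← hσi₁, ← hσi₀, h]
  -- difference sum lemma
  have hsupp : ∀ (τ : Equiv.Perm (Fin p)),
      ∑ i, lam i * c (σ i) - ∑ i, lam i * b (τ i)
        = ∑ i, (lam i * c (σ i) - lam i * b (τ i)) := by
    intro τ; rw [Finset.sum_sub_distrib]
  rcases le_or_gt (lam i₀) (lam i₁) with hcase | hcase
  · -- use σ itself
    have hdiff : ∑ i, lam i * c (σ i) - ∑ i, lam i * b (σ i)
        = lam i₀ * ε - lam i₁ * ε := by
      rw [hsupp σ]
      rw [show (Finset.univ : Finset (Fin p)) = insert i₀ (insert i₁ (Finset.univ \ {i₀, i₁}))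
        by
          rw [Finset.insert_eq, Finset.insert_eq, ← Finset.union_assoc, ← Finset.insert_eq,
            Finset.union_sdiff_of_subset (Finset.subset_univ _)]]
      rw [Finset.sum_insert (by simp [hi01]), Finset.sum_insert (by simp)]
      have hrest : ∑ i ∈ Finset.univ \ {i₀, i₁}, (lam i * c (σ i) - lam i * b (σ i)) = 0 := by
        apply Finset.sum_eq_zero
        intro i hi
        simp only [Finset.mem_sdiff, Finset.mem_insert, Finset.mem_singleton] at hi
        have h1 : σ i ≠ l := fun h => hi.2 (Or.inl (σ.injective (h.trans hσi₀.symm)))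
        have h2 : σ i ≠ j := fun h => hi.2 (Or.inr (σ.injective (h.trans hσi₁.symm)))
        simp [hc, h1, h2]
      rw [hrest, hσi₀, hσi₁]
      simp [hc, hjl']
      ring
    have hle := sum_perm_le_Jlam lam hlam_anti b hb σ
    have : lam i₀ * ε - lam i₁ * ε ≤ 0 := by nlinarith
    linarith [hJc ▸ (by linarith [hdiff] : Jlam lam c ≤ ∑ i, lam i * b (σ i) + (lam i₀ * ε - lam i₁ * ε))]
  · -- use σ composed with the swap of i₀ and i₁
    set τ := (Equiv.swap i₀ i₁).trans σ with hτ
    have hτi₀ : τ i₀ = j := by simp [hτ, Equiv.swap_apply_left, hσi₁]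
    have hτi₁ : τ i₁ = l := by simp [hτ, Equiv.swap_apply_right, hσi₀]
    have hdiff : ∑ i, lam i * c (σ i) - ∑ i, lam i * b (τ i)
        = lam i₀ * (b l + ε - b j) + lam i₁ * (b j - ε - b l) := by
      rw [hsupp τ]
      rw [show (Finset.univ : Finset (Fin p)) = insert i₀ (insert i₁ (Finset.univ \ {i₀, i₁}))
        by
          rw [Finset.insert_eq, Finset.insert_eq, ← Finset.union_assoc, ← Finset.insert_eq,
            Finset.union_sdiff_of_subset (Finset.subset_univ _)]]
      rw [Finset.sum_insert (by simp [hi01]), Finset.sum_insert (by simp)]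
      have hrest : ∑ i ∈ Finset.univ \ {i₀, i₁}, (lam i * c (σ i) - lam i * b (τ i)) = 0 := by
        apply Finset.sum_eq_zero
        intro i hi
        simp only [Finset.mem_sdiff, Finset.mem_insert, Finset.mem_singleton] at hi
        have h1 : σ i ≠ l := fun h => hi.2 (Or.inl (σ.injective (h.trans hσi₀.symm)))
        have h2 : σ i ≠ j := fun h => hi.2 (Or.inr (σ.injective (h.trans hσi₁.symm)))
        have hτeq : τ i = σ i := by
          simp [hτ, Equiv.swap_apply_of_ne_of_ne (fun h => hi.2 (Or.inl h))
            (fun h => hi.2 (Or.inr h))]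
        rw [hτeq]
        simp [hc, h1, h2]
      rw [hrest, hσi₀, hσi₁, hτi₀, hτi₁]
      simp [hc, hjl']
      ring
    have hle := sum_perm_le_Jlam lam hlam_anti b hb τ
    have : lam i₀ * (b l + ε - b j) + lam i₁ * (b j - ε - b l) ≤ 0 := by nlinarith
    linarith [hJc ▸ (by linarith [hdiff] : Jlam lam c ≤ ∑ i, lam i * b (τ i)
      + (lam i₀ * (b l + ε - b j) + lam i₁ * (b j - ε - b l)))]
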